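/- Let X₁, X₂ and Y be Banach spaces, let X = X₁ ⊕_∞ X₂, and let T : X → Y be a bounded linear operator. If T is a narrow operator, then the restrictions T₁ and T₂ of T to X₁ and X₂ are narrow operators. -/

import Mathlib

set_option maxHeartbeats 4000000

/-- A bounded linear operator `T : X → Y` is *narrow* if for every `x, y` in the unit
sphere of `X`, every continuous linear functional `f` on `X` and every `ε > 0` there is
`z` in the unit sphere with `‖x + z‖ ≥ 2 - ε` and `‖T (y - z)‖ + |f (y - z)| ≤ ε`. -/
def IsNarrow {X Y : Type*} [NormedAddCommGroup X] [NormedSpace ℝ X]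
    [NormedAddCommGroup Y] [NormedSpace ℝ Y] (T : X →L[ℝ] Y) : Prop :=
  ∀ x y : X, ‖x‖ = 1 → ‖y‖ = 1 → ∀ f : X →L[ℝ] ℝ, ∀ ε : ℝ, 0 < ε →
    ∃ z : X, ‖z‖ = 1 ∧ 2 - ε ≤ ‖x + z‖ ∧ ‖T (y - z)‖ + |f (y - z)| ≤ ε

section Aux

variable {X₁ X₂ Y : Type*}
  [NormedAddCommGroup X₁] [NormedSpace ℝ X₁]
  [NormedAddCommGroup X₂] [NormedSpace ℝ X₂]
  [NormedAddCommGroup Y] [NormedSpace ℝ Y]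

lemma norm_esymm (a : X₁) (b : X₂) :
    ‖(WithLp.prodContinuousLinearEquiv ⊤ ℝ X₁ X₂).symm (a, b)‖ = max ‖a‖ ‖b‖ := rfl

/-- Narrowness transfers through a (surjective) linear isometry precomposition. -/
lemma IsNarrow.comp_equiv {E F : Type*}
    [NormedAddCommGroup E] [NormedSpace ℝ E] [NormedAddCommGroup F] [NormedSpace ℝ F]
    (T : F →L[ℝ] Y) (Φ : E ≃L[ℝ] F) (hΦ : ∀ u : E, ‖Φ u‖ = ‖u‖)
    (hT : IsNarrow T) : IsNarrow (T.comp (Φ : E →L[ℝ] F)) := by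
  intro x y hx hy f ε hε
  obtain ⟨z, hz1, hz2, hz3⟩ := hT (Φ x) (Φ y) (by rw [hΦ, hx]) (by rw [hΦ, hy])
    (f.comp (Φ.symm : F →L[ℝ] E)) ε hε
  refine ⟨Φ.symm z, ?_, ?_, ?_⟩
  · rw [← hΦ (Φ.symm z), Φ.apply_symm_apply, hz1]
  · calc 2 - ε ≤ ‖Φ x + z‖ := hz2
      _ = ‖Φ (x + Φ.symm z)‖ := by rw [map_add, Φ.apply_symm_apply]
      _ = ‖x + Φ.symm z‖ := hΦ _
  · have h1 : (T.comp (Φ : E →L[ℝ] F)) (y - Φ.symm z) = T (Φ y - z) := by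
      simp [map_sub]
    have h2 : (f.comp (Φ.symm : F →L[ℝ] E)) (Φ y - z) = f (y - Φ.symm z) := by
      simp [map_sub]
    rw [h1, ← h2]; exact hz3

/-- The main lemma: the first restriction of a narrow operator on an `∞`-sum is narrow. -/
lemma isNarrow_fst (T : WithLp ⊤ (X₁ × X₂) →L[ℝ] Y) (S : X₁ →L[ℝ] Y)
    (hS : ∀ a : X₁, S a = T ((WithLp.prodContinuousLinearEquiv ⊤ ℝ X₁ X₂).symm (a, 0)))
    (hT : IsNarrow T) : IsNarrow S := by
  classical
  set e := WithLp.prodContinuousLinearEquiv ⊤ ℝ X₁ X₂ with he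
  intro x y hx hy f ε hε
  -- choose the number of steps
  obtain ⟨n, hn⟩ := exists_nat_gt (4 * ‖T‖ / ε)
  set m : ℕ := n + 1 with hm
  have hm1 : (1:ℝ) ≤ m := by exact_mod_cast Nat.one_le_iff_ne_zero.2 (by simp [hm])
  have hm0 : (0:ℝ) < m := by linarith
  have hTm : ‖T‖ / m < ε / 4 := by
    have hnm : (4 * ‖T‖ / ε) < (m:ℝ) := by
      refine lt_of_lt_of_le hn ?_
      exact_mod_cast Nat.le_succ n
    have h4 : 4 * ‖T‖ < (m:ℝ) * ε := (div_lt_iff₀ hε).1 hnm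
    rw [div_lt_div_iff₀ hm0 (by norm_num : (0:ℝ) < 4)]
    nlinarith
  set C : ℝ := ‖T‖ + ‖f‖ with hC
  have hC0 : 0 ≤ C := by positivity
  set δ : ℝ := min (1/(4*m)) (min (ε/(8*m)) (ε/(8*(1+m*C)))) with hδ
  have hδ0 : 0 < δ := by
    refine lt_min (by positivity) (lt_min (by positivity) (by positivity))
  have hδ1 : δ ≤ 1/(4*m) := min_le_left _ _
  have hδ2 : δ ≤ ε/(8*m) := le_trans (min_le_right _ _) (min_le_left _ _)
  have hδ3 : δ ≤ ε/(8*(1+m*C)) := le_trans (min_le_right _ _) (min_le_right _ _)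
  have hδlt1 : δ < 1 := by
    have : 1/(4*(m:ℝ)) ≤ 1/4 := by
      apply div_le_div_of_nonneg_left (by norm_num) (by norm_num) ?_ <;> linarith
    linarith
  set β : ℝ := (m:ℝ)⁻¹ with hβ
  have hβ0 : 0 < β := by positivity
  have hβm : β * (m:ℝ) = 1 := inv_mul_cancel₀ (ne_of_gt hm0)
  have hβ1 : β ≤ 1 := by nlinarith
  have hβδ : 2*δ ≤ β/2 := by
    have : (1:ℝ)/(4*m) = β/4 := by rw [hβ]; ring
    linarith [hδ1]
  -- the basic step produced by narrowness of `T`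
  have step : ∀ p : X₁ × X₂, 1 ≤ ‖x + β • p.1‖ → ‖p.2‖ ≤ 1 →
      ∃ q : X₁ × X₂, ‖q.2‖ ≤ 1 ∧ ‖q.1 - p.1‖ ≤ 1 ∧
        (1-δ) * ‖x + β • p.1‖ + β ≤ ‖x + β • q.1‖ ∧
        ‖T (e.symm (y - (q.1 - p.1), p.2 - q.2))‖ + |f (y - (q.1 - p.1))| ≤ δ := by
    intro p hp1 hp2
    set v : X₁ := x + β • p.1 with hv
    have hv1 : 1 ≤ ‖v‖ := hp1
    have hv0 : ‖v‖ ≠ 0 := by positivity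
    have hxhat : ‖e.symm (‖v‖⁻¹ • v, (0:X₂))‖ = 1 := by
      rw [norm_esymm, norm_smul, norm_inv, norm_norm, inv_mul_cancel₀ hv0]
      simp
    have hyt : ‖e.symm (y, p.2)‖ = 1 := by
      rw [norm_esymm, hy, max_eq_left hp2]
    obtain ⟨z, hz1, hz2, hz3⟩ := hT (e.symm (‖v‖⁻¹ • v, 0)) (e.symm (y, p.2)) hxhat hyt
      (f.comp ((ContinuousLinearMap.fst ℝ X₁ X₂).comp
        (e : WithLp ⊤ (X₁ × X₂) →L[ℝ] X₁ × X₂))) δ hδ0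
    set a : X₁ := (e z).1 with ha
    set b' : X₂ := (e z).2 with hb'
    have hz : z = e.symm (a, b') := by rw [ha, hb']; simp
    have hza : max ‖a‖ ‖b'‖ = 1 := by rw [← norm_esymm, ← hz, hz1]
    have ha1 : ‖a‖ ≤ 1 := le_of_le_of_eq (le_max_left _ _) hza
    have hb1 : ‖b'‖ ≤ 1 := le_of_le_of_eq (le_max_right _ _) hza
    refine ⟨(p.1 + a, b'), hb1, by simpa using ha1, ?_, ?_⟩
    · -- norm growth
      have hsum : e.symm (‖v‖⁻¹ • v, (0:X₂)) + z = e.symm (‖v‖⁻¹ • v + a, b') := by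
        rw [hz, ← map_add]; congr 1; simp
      have hmax : 2 - δ ≤ max ‖‖v‖⁻¹ • v + a‖ ‖b'‖ := by
        rw [← norm_esymm, ← hsum]; exact hz2
      have hA : 2 - δ ≤ ‖‖v‖⁻¹ • v + a‖ := by
        rcases max_cases ‖‖v‖⁻¹ • v + a‖ ‖b'‖ with ⟨h1, h2⟩ | ⟨h1, h2⟩
        · rwa [h1] at hmax
        · rw [h1] at hmax; linarith
      have hscale : (2 - δ) * ‖v‖ ≤ ‖v + ‖v‖ • a‖ := by
        have hvv : ‖v‖ • (‖v‖⁻¹ • v + a) = v + ‖v‖ • a := by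
          rw [smul_add, smul_smul, mul_inv_cancel₀ hv0, one_smul]
        have hnn : ‖v + ‖v‖ • a‖ = ‖v‖ * ‖‖v‖⁻¹ • v + a‖ := by
          rw [← hvv, norm_smul, norm_norm]
        rw [hnn]
        calc (2 - δ) * ‖v‖ = ‖v‖ * (2 - δ) := by ring
          _ ≤ ‖v‖ * ‖‖v‖⁻¹ • v + a‖ :=
              mul_le_mul_of_nonneg_left hA (norm_nonneg _)
      have key : ‖v + ‖v‖ • a‖ - (‖v‖ - β) ≤ ‖x + β • (p.1 + a)‖ := by
        have heq : x + β • (p.1 + a) = (v + ‖v‖ • a) - (‖v‖ - β) • a := by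
          rw [hv]; module
        rw [heq]
        have := norm_sub_norm_le (v + ‖v‖ • a) ((‖v‖ - β) • a)
        have hna : ‖(‖v‖ - β) • a‖ ≤ ‖v‖ - β := by
          rw [norm_smul, Real.norm_eq_abs, abs_of_nonneg (by linarith)]
          nlinarith
        linarith [norm_sub_norm_le (v + ‖v‖ • a) ((‖v‖ - β) • a)]
      have : (1-δ) * ‖v‖ + β ≤ ‖v + ‖v‖ • a‖ - (‖v‖ - β) := by nlinarith
      calc (1-δ) * ‖x + β • p.1‖ + β = (1-δ) * ‖v‖ + β := by rw [hv]
        _ ≤ ‖v + ‖v‖ • a‖ - (‖v‖ - β) := this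
        _ ≤ ‖x + β • (p.1 + a)‖ := key
    · -- T and f estimate
      have hdiff : e.symm (y, p.2) - z = e.symm (y - (p.1 + a - p.1), p.2 - b') := by
        rw [hz, ← map_sub]; congr 1; simp
      rw [hdiff] at hz3
      simpa using hz3
  -- iterate the step `m` times
  choose! nxt hq1 hq2 hq3 hq4 using step
  set seq : ℕ → X₁ × X₂ := fun k => nxt^[k] (0, 0) with hseqdef
  have hseq0 : seq 0 = (0, 0) := rfl
  have hseqS : ∀ k, seq (k+1) = nxt (seq k) := fun k =>
    Function.iterate_succ_apply' nxt k (0, 0)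
  have hc0 : (0:ℝ) ≤ β - 2*δ := by linarith
  have inv : ∀ k : ℕ, k ≤ m →
      ‖(seq k).2‖ ≤ 1 ∧
      1 + (k:ℝ) * (β - 2*δ) ≤ ‖x + β • (seq k).1‖ ∧
      ‖(seq k).1‖ ≤ (k:ℝ) ∧
      ‖T (e.symm ((k:ℝ) • y - (seq k).1, -(seq k).2))‖ ≤ (k:ℝ) * δ ∧
      |f ((k:ℝ) • y - (seq k).1)| ≤ (k:ℝ) * δ := by
    intro k
    induction k with
    | zero =>
      intro _
      refine ⟨by simp [hseq0], by simp [hseq0, hx], by simp [hseq0], ?_, by simp [hseq0]⟩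
      simp [hseq0, Prod.mk_zero_zero]
    | succ k ih =>
      intro hk1
      have hk : k ≤ m := le_trans (Nat.le_succ k) hk1
      obtain ⟨I1, I2, I3, I4, I5⟩ := ih hk
      have hkm : (k:ℝ) ≤ (m:ℝ) := by exact_mod_cast hk
      have hk0 : (0:ℝ) ≤ (k:ℝ) := Nat.cast_nonneg k
      have hpre1 : 1 ≤ ‖x + β • (seq k).1‖ := by nlinarith
      have hstep : seq (k+1) = nxt (seq k) := hseqS k
      have J1 := hq1 (seq k) hpre1 I1
      have J2 := hq2 (seq k) hpre1 I1
      have J3 := hq3 (seq k) hpre1 I1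
      have J4 := hq4 (seq k) hpre1 I1
      set q : X₁ × X₂ := nxt (seq k) with hqdef
      rw [hstep]
      push_cast
      have hkc : (k:ℝ) * (β - 2*δ) ≤ 1 := by nlinarith
      refine ⟨J1, ?_, ?_, ?_, ?_⟩
      · have h5 : (1-δ) * (1 + (k:ℝ)*(β-2*δ)) ≤ (1-δ) * ‖x + β • (seq k).1‖ :=
          mul_le_mul_of_nonneg_left I2 (by linarith)
        nlinarith [mul_nonneg hδ0.le (sub_nonneg.2 hkc)]
      · have h6 : q.1 = (seq k).1 + (q.1 - (seq k).1) := by module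
        calc ‖q.1‖ = ‖(seq k).1 + (q.1 - (seq k).1)‖ := by rw [← h6]
          _ ≤ ‖(seq k).1‖ + ‖q.1 - (seq k).1‖ := norm_add_le _ _
          _ ≤ (k:ℝ) + 1 := add_le_add I3 J2
      · have hsplit : e.symm (((k:ℝ)+1) • y - q.1, -q.2)
            = e.symm ((k:ℝ) • y - (seq k).1, -(seq k).2)
              + e.symm (y - (q.1 - (seq k).1), (seq k).2 - q.2) := by
          rw [← map_add, Prod.mk_add_mk]
          congr 1
          simp only [Prod.mk.injEq]
          constructor <;> module
        rw [hsplit, map_add]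
        calc ‖T (e.symm ((k:ℝ) • y - (seq k).1, -(seq k).2))
              + T (e.symm (y - (q.1 - (seq k).1), (seq k).2 - q.2))‖
            ≤ ‖T (e.symm ((k:ℝ) • y - (seq k).1, -(seq k).2))‖
              + ‖T (e.symm (y - (q.1 - (seq k).1), (seq k).2 - q.2))‖ := norm_add_le _ _
          _ ≤ (k:ℝ) * δ + δ := add_le_add I4 (by
              have := abs_nonneg (f (y - (q.1 - (seq k).1))); linarith)
          _ = ((k:ℝ) + 1) * δ := by ring
      · have hsplit : ((k:ℝ)+1) • y - q.1
            = ((k:ℝ) • y - (seq k).1) + (y - (q.1 - (seq k).1)) := by module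
        rw [hsplit, map_add]
        calc |f ((k:ℝ) • y - (seq k).1) + f (y - (q.1 - (seq k).1))|
            ≤ |f ((k:ℝ) • y - (seq k).1)| + |f (y - (q.1 - (seq k).1))| := abs_add_le _ _
          _ ≤ (k:ℝ) * δ + δ := add_le_add I5 (by
              have := norm_nonneg (T (e.symm (y - (q.1 - (seq k).1), (seq k).2 - q.2)))
              linarith)
          _ = ((k:ℝ) + 1) * δ := by ring
  -- conclude
  obtain ⟨I1, I2, I3, I4, I5⟩ := inv m le_rfl
  set w : X₁ := β • (seq m).1 with hw
  have hβm' : (m:ℝ) * (β - 2*δ) = 1 - 2*(m:ℝ)*δ := by linear_combination hβm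
  have hxw : 2 - 2*(m:ℝ)*δ ≤ ‖x + w‖ := by rw [hw]; linarith [I2, hβm']
  have hw_le : ‖w‖ ≤ 1 := by
    rw [hw, norm_smul, Real.norm_eq_abs, abs_of_pos hβ0]
    nlinarith
  have h2mδ : 2*(m:ℝ)*δ ≤ 1/2 := by
    have h12 : δ * (4*(m:ℝ)) ≤ 1 := (le_div_iff₀ (by positivity)).1 hδ1
    linarith
  have hwn : 1 - 2*(m:ℝ)*δ ≤ ‖w‖ := by
    have := norm_add_le x w
    rw [hx] at this
    linarith
  have hw_pos : (0:ℝ) < ‖w‖ := by linarith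
  have hby : β • ((m:ℝ) • y) = y := by rw [smul_smul, hβm, one_smul]
  have hfw : |f (y - w)| ≤ δ := by
    have hv : y - w = β • ((m:ℝ) • y - (seq m).1) := by
      rw [smul_sub, hby, hw]
    rw [hv, map_smul]
    rw [smul_eq_mul, abs_mul, abs_of_pos hβ0]
    calc β * |f ((m:ℝ) • y - (seq m).1)| ≤ β * ((m:ℝ) * δ) :=
        mul_le_mul_of_nonneg_left I5 hβ0.le
      _ = (β * (m:ℝ)) * δ := by ring
      _ = δ := by rw [hβm, one_mul]
  have hTw : ‖T (e.symm (y - w, (0:X₂)))‖ ≤ δ + β * ‖T‖ := by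
    have hvec : e.symm (y - w, (0:X₂))
        = β • e.symm ((m:ℝ) • y - (seq m).1, -(seq m).2)
          + e.symm (0, β • (seq m).2) := by
      rw [← map_smul, ← map_add, Prod.smul_mk, Prod.mk_add_mk]
      congr 1
      simp only [Prod.mk.injEq]
      constructor
      · rw [smul_sub, hby, hw]; module
      · module
    rw [hvec, map_add, map_smul]
    have h13 : ‖β • T (e.symm ((m:ℝ) • y - (seq m).1, -(seq m).2))‖ ≤ δ := by
      rw [norm_smul, Real.norm_eq_abs, abs_of_pos hβ0]
      calc β * ‖T (e.symm ((m:ℝ) • y - (seq m).1, -(seq m).2))‖ ≤ β * ((m:ℝ) * δ) :=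
          mul_le_mul_of_nonneg_left I4 hβ0.le
        _ = (β * (m:ℝ)) * δ := by ring
        _ = δ := by rw [hβm, one_mul]
    have h14 : ‖T (e.symm ((0:X₁), β • (seq m).2))‖ ≤ β * ‖T‖ := by
      calc ‖T (e.symm ((0:X₁), β • (seq m).2))‖
          ≤ ‖T‖ * ‖e.symm ((0:X₁), β • (seq m).2)‖ := T.le_opNorm _
        _ = ‖T‖ * ‖β • (seq m).2‖ := by
            rw [norm_esymm, norm_zero, max_eq_right (norm_nonneg _)]
        _ ≤ ‖T‖ * β := by
            rw [norm_smul, Real.norm_eq_abs, abs_of_pos hβ0]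
            have : β * ‖(seq m).2‖ ≤ β * 1 := mul_le_mul_of_nonneg_left I1 hβ0.le
            nlinarith [norm_nonneg T]
        _ = β * ‖T‖ := by ring
    calc ‖β • T (e.symm ((m:ℝ) • y - (seq m).1, -(seq m).2))
          + T (e.symm ((0:X₁), β • (seq m).2))‖
        ≤ ‖β • T (e.symm ((m:ℝ) • y - (seq m).1, -(seq m).2))‖
          + ‖T (e.symm ((0:X₁), β • (seq m).2))‖ := norm_add_le _ _
      _ ≤ δ + β * ‖T‖ := add_le_add h13 h14
  -- the final witness
  set z' : X₁ := ‖w‖⁻¹ • w with hz'def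
  have hz'norm : ‖z'‖ = 1 := by
    rw [hz'def, norm_smul, norm_inv, norm_norm, inv_mul_cancel₀ (ne_of_gt hw_pos)]
  have hinv1 : 1 ≤ ‖w‖⁻¹ := by
    nlinarith [mul_inv_cancel₀ (ne_of_gt hw_pos), inv_nonneg.2 hw_pos.le]
  have hdist : ‖z' - w‖ = 1 - ‖w‖ := by
    rw [hz'def]
    have h15 : ‖w‖⁻¹ • w - w = (‖w‖⁻¹ - 1) • w := by rw [sub_smul, one_smul]
    rw [h15, norm_smul, Real.norm_eq_abs, abs_of_nonneg (by linarith), sub_mul,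
      inv_mul_cancel₀ (ne_of_gt hw_pos), one_mul]
  have hd : ‖z' - w‖ ≤ 2*(m:ℝ)*δ := by rw [hdist]; linarith
  refine ⟨z', hz'norm, ?_, ?_⟩
  · have h7 := norm_add_le (x + z') (w - z')
    have h8 : x + z' + (w - z') = x + w := by module
    rw [h8] at h7
    have h9 : ‖w - z'‖ = ‖z' - w‖ := norm_sub_rev _ _
    have h10 : δ * (8*(m:ℝ)) ≤ ε := (le_div_iff₀ (by positivity)).1 hδ2
    linarith
  · have hSnorm : ∀ a : X₁, ‖S a‖ ≤ ‖T‖ * ‖a‖ := by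
      intro a
      rw [hS]
      calc ‖T (e.symm (a, (0:X₂)))‖ ≤ ‖T‖ * ‖e.symm (a, (0:X₂))‖ := T.le_opNorm _
        _ = ‖T‖ * ‖a‖ := by rw [norm_esymm]; congr 1; simp
    have hsplit2 : y - z' = (y - w) + (w - z') := by module
    have hS1 : ‖S (y - z')‖ ≤ ‖T (e.symm (y - w, (0:X₂)))‖ + ‖T‖ * ‖w - z'‖ := by
      rw [hsplit2, map_add]
      refine le_trans (norm_add_le _ _) (add_le_add (le_of_eq (by rw [hS])) (hSnorm _))
    have hf1 : |f (y - z')| ≤ |f (y - w)| + ‖f‖ * ‖w - z'‖ := by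
      rw [hsplit2, map_add]
      refine le_trans (abs_add_le _ _) (add_le_add le_rfl ?_)
      simpa using f.le_opNorm (w - z')
    have h9 : ‖w - z'‖ = ‖z' - w‖ := norm_sub_rev _ _
    have hTd : ‖T‖ * ‖w - z'‖ ≤ ‖T‖ * (2*(m:ℝ)*δ) :=
      mul_le_mul_of_nonneg_left (by rw [h9]; exact hd) (norm_nonneg _)
    have hfd : ‖f‖ * ‖w - z'‖ ≤ ‖f‖ * (2*(m:ℝ)*δ) :=
      mul_le_mul_of_nonneg_left (by rw [h9]; exact hd) (norm_nonneg _)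
    have h16 : δ * (8*(1+(m:ℝ)*C)) ≤ ε := (le_div_iff₀ (by positivity)).1 hδ3
    have hCd2 : C * (2*(m:ℝ)*δ) ≤ ε/4 := by nlinarith
    have hβT : β * ‖T‖ < ε/4 := by
      have : ‖T‖ / (m:ℝ) = β * ‖T‖ := by rw [hβ, div_eq_mul_inv]; ring
      linarith [hTm]
    have hδε : δ ≤ ε/8 := by
      refine le_trans hδ2 ?_
      rw [div_le_div_iff₀ (by positivity) (by norm_num)]
      nlinarith
    have hCsum : ‖T‖ * (2*(m:ℝ)*δ) + ‖f‖ * (2*(m:ℝ)*δ) = C * (2*(m:ℝ)*δ) := by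
      rw [hC]; ring
    linarith [hS1, hf1, hTw, hfw, hTd, hfd]


end Aux

theorem restrictions_narrow_of_inftySum
    {X₁ X₂ Y : Type*}
    [NormedAddCommGroup X₁] [NormedSpace ℝ X₁] [CompleteSpace X₁]
    [NormedAddCommGroup X₂] [NormedSpace ℝ X₂] [CompleteSpace X₂]
    [NormedAddCommGroup Y] [NormedSpace ℝ Y] [CompleteSpace Y]
    (T : WithLp ⊤ (X₁ × X₂) →L[ℝ] Y)
    (T₁ : X₁ →L[ℝ] Y) (T₂ : X₂ →L[ℝ] Y)
    (hT₁ : ∀ x₁ : X₁, T₁ x₁ = T ((WithLp.prodContinuousLinearEquiv ⊤ ℝ X₁ X₂).symm (x₁, 0)))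
    (hT₂ : ∀ x₂ : X₂, T₂ x₂ = T ((WithLp.prodContinuousLinearEquiv ⊤ ℝ X₁ X₂).symm (0, x₂)))
    (hT : IsNarrow T) :
    IsNarrow T₁ ∧ IsNarrow T₂ := by
  constructor
  · exact isNarrow_fst T T₁ hT₁ hT
  · -- swap coordinates
    set Φ : WithLp ⊤ (X₂ × X₁) ≃L[ℝ] WithLp ⊤ (X₁ × X₂) :=
      (WithLp.prodContinuousLinearEquiv ⊤ ℝ X₂ X₁).trans
        ((ContinuousLinearEquiv.prodComm ℝ X₂ X₁).trans
          (WithLp.prodContinuousLinearEquiv ⊤ ℝ X₁ X₂).symm) with hΦdef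
    have hΦnorm : ∀ u : WithLp ⊤ (X₂ × X₁), ‖Φ u‖ = ‖u‖ := by
      intro u
      have h1 : Φ u = (WithLp.prodContinuousLinearEquiv ⊤ ℝ X₁ X₂).symm
          ((WithLp.prodContinuousLinearEquiv ⊤ ℝ X₂ X₁ u).2,
           (WithLp.prodContinuousLinearEquiv ⊤ ℝ X₂ X₁ u).1) := rfl
      rw [h1, norm_esymm]
      have h2 : u = (WithLp.prodContinuousLinearEquiv ⊤ ℝ X₂ X₁).symm
          ((WithLp.prodContinuousLinearEquiv ⊤ ℝ X₂ X₁ u).1,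
           (WithLp.prodContinuousLinearEquiv ⊤ ℝ X₂ X₁ u).2) := rfl
      rw [max_comm]
      conv_rhs => rw [h2, norm_esymm]
    have hT' : IsNarrow (T.comp (Φ : WithLp ⊤ (X₂ × X₁) →L[ℝ] WithLp ⊤ (X₁ × X₂))) :=
      IsNarrow.comp_equiv T Φ hΦnorm hT
    refine isNarrow_fst (T.comp (Φ : WithLp ⊤ (X₂ × X₁) →L[ℝ] WithLp ⊤ (X₁ × X₂))) T₂ ?_ hT'
    intro b
    rw [hT₂ b]
    congr 1
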